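/- The pairing transformation in Theil-Sen with k random matchings is k-Lipschitz: for datasets d, d' of n points differing in h records, there is a coupling of the multisets of pairwise estimates T(d), T(d') (each of size kn/2) under which they differ in at most k·h elements with probability 1. -/

import Mathlib

private lemma add_sub_add_le_ms {β : Type*} [DecidableEq β] (a b c d : Multiset β) :
    (a + c) - (b + d) ≤ (a - b) + (c - d) := by
  rw [Multiset.le_iff_count]
  intro x
  simp only [Multiset.count_sub, Multiset.count_add]
  omega

private lemma bind_sub_card {α γ : Type*} [DecidableEq γ] (t : Multiset α)
    (f g : α → Multiset γ) (m : ℕ) (h : ∀ a, Multiset.card (f a - g a) ≤ m) :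
    Multiset.card (t.bind f - t.bind g) ≤ Multiset.card t * m := by
  induction t using Multiset.induction with
  | empty => simp
  | cons a t ih =>
    rw [Multiset.cons_bind, Multiset.cons_bind, Multiset.card_cons]
    calc Multiset.card ((f a + t.bind f) - (g a + t.bind g))
        ≤ Multiset.card ((f a - g a) + (t.bind f - t.bind g)) :=
          Multiset.card_le_card (add_sub_add_le_ms _ _ _ _)
      _ = Multiset.card (f a - g a) + Multiset.card (t.bind f - t.bind g) := by
          rw [Multiset.card_add]
      _ ≤ m + Multiset.card t * m := Nat.add_le_add (h a) ih
      _ = (Multiset.card t + 1) * m := by ring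

private lemma card_sub_map {α β : Type*} [DecidableEq β] (s : Multiset α) (f g : α → β)
    [DecidablePred fun x => f x ≠ g x] :
    Multiset.card (s.map f - s.map g) ≤
      Multiset.card (s.filter fun x => f x ≠ g x) := by
  have h1 : s.map f ≤ (s.filter fun x => f x ≠ g x).map f + s.map g := by
    have hs : s.filter (fun x => f x ≠ g x) + s.filter (fun x => ¬ f x ≠ g x) = s :=
      Multiset.filter_add_not _ s
    calc s.map f
        = (s.filter fun x => f x ≠ g x).map f + (s.filter fun x => ¬ f x ≠ g x).map f := by
          rw [← Multiset.map_add, hs]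
      _ ≤ (s.filter fun x => f x ≠ g x).map f + s.map g := by
          apply add_le_add_right
          have heq : (s.filter fun x => ¬ f x ≠ g x).map f
              = (s.filter fun x => ¬ f x ≠ g x).map g :=
            Multiset.map_congr rfl (by
              intro x hx
              have := Multiset.of_mem_filter hx
              simpa using this)
          rw [heq]
          exact Multiset.map_le_map (Multiset.filter_le _ s)
  have h2 : s.map f - s.map g ≤ (s.filter fun x => f x ≠ g x).map f :=
    Multiset.sub_le_iff_le_add.mpr h1
  calc Multiset.card (s.map f - s.map g)
      ≤ Multiset.card ((s.filter fun x => f x ≠ g x).map f) := Multiset.card_le_card h2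
    _ = Multiset.card (s.filter fun x => f x ≠ g x) := Multiset.card_map _ _

/-- the Theil-Sen pairing transformation with `k` matchings is
`k`-Lipschitz: coupling the `k` sampled matchings `S` between the two runs, the
multisets of pairwise estimates differ in at most `k · h` elements, where `h` is the
number of records in which `d` and `d'` differ. -/
theorem theilsen_pairing_lipschitz (n k : ℕ) (hn : 2 ≤ n)
    (σ : Fin (n - 1) → Equiv.Perm (Fin n))
    (hinv : ∀ h i, σ h (σ h i) = i)
    (hnofix : ∀ h i, σ h i ≠ i)
    (hdecomp : ∀ i j : Fin n, i ≠ j → ∃! h, σ h i = j)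
    (est : (ℝ × ℝ) → (ℝ × ℝ) → ℝ)
    (S : Finset (Fin (n - 1))) (hS : S.card = k)
    (d d' : Fin n → ℝ × ℝ) :
    Multiset.card
      ((S.val.bind fun h =>
          (Finset.univ.filter fun i : Fin n => i < σ h i).val.map
            fun i => est (d i) (d (σ h i)))
        - (S.val.bind fun h =>
          (Finset.univ.filter fun i : Fin n => i < σ h i).val.map
            fun i => est (d' i) (d' (σ h i))))
      ≤ k * {i | d i ≠ d' i}.ncard := by
  classical
  set D : Finset (Fin n) := Finset.univ.filter fun i => d i ≠ d' i with hDdef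
  have hD : {i | d i ≠ d' i}.ncard = D.card := by
    have : {i | d i ≠ d' i} = (D : Set (Fin n)) := by
      ext i; simp [hDdef]
    rw [this, Set.ncard_coe_finset]
  rw [hD, ← hS, Finset.card]
  apply bind_sub_card
  intro h
  -- per-matching bound
  refine le_trans (card_sub_map _ _ _) ?_
  set P : Fin n → Prop := fun i => est (d i) (d (σ h i)) ≠ est (d' i) (d' (σ h i)) with hP
  have hfil : ((Finset.univ.filter fun i : Fin n => i < σ h i).val.filter P)
      = ((Finset.univ.filter fun i : Fin n => i < σ h i).filter P).val := by
    simp [Finset.filter_val]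
  rw [hfil, ← Finset.card_def]
  apply Finset.card_le_card_of_injOn (fun i => if d i ≠ d' i then i else σ h i)
  · intro i hi
    simp only [Finset.mem_coe, Finset.mem_filter, Finset.mem_univ, true_and] at hi
    obtain ⟨hlt, hPi⟩ := hi
    by_cases hdi : d i ≠ d' i
    · simp [hdi, hDdef]
    · push_neg at hdi
      have hds : d (σ h i) ≠ d' (σ h i) := by
        intro heq
        exact hPi (by rw [hdi, heq])
      simp [hdi, hds, hDdef]
  · intro i hi j hj hij
    simp only [Finset.coe_filter, Set.mem_setOf_eq, Finset.mem_filter,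
      Finset.mem_univ, true_and] at hi hj
    obtain ⟨hi1, -⟩ := hi
    obtain ⟨hj1, -⟩ := hj
    simp only at hij
    by_cases h1 : d i ≠ d' i <;> by_cases h2 : d j ≠ d' j
    · rw [if_pos h1, if_pos h2] at hij; exact hij
    · rw [if_pos h1, if_neg h2] at hij
      exfalso
      have hji : σ h i = j := by rw [hij, hinv]
      have hij' : i < j := hji ▸ hi1
      have hji' : j < i := hij ▸ hj1
      exact absurd hji' (not_lt_of_gt hij')
    · rw [if_neg h1, if_pos h2] at hij
      exfalso
      have hji : σ h j = i := by rw [← hij, hinv]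
      have hij' : j < i := hji ▸ hj1
      have hji' : i < j := hij ▸ hi1
      exact absurd hji' (not_lt_of_gt hij')
    · rw [if_neg h1, if_neg h2] at hij
      have := congrArg (σ h) hij
      rwa [hinv, hinv] at this
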